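/- Let 0 < ε ≤ 1 and 0 < δ ≤ 1/2, let μ, μ' be distributions over [n] such that |μ(i) − 1/n| < ε/(100n) for every i ∈ [n] and d(μ,μ') ≥ ε, and let k = ⌈(6/ε)·log(1/δ)⌉ (natural logarithm). If i_1, …, i_k are independent uniformly random elements of [n], then with probability at least 1 − δ/3 there exists some 1 ≤ t ≤ k with μ'(i_t) < μ(i_t). -/

import Mathlib

open Finset MeasureTheory

set_option maxHeartbeats 1000000 in
/-- If `μ` is pointwise within `ε/(100n)` of uniform, `d(μ,μ') ≥ ε`,
and `k = ⌈(6/ε)·log(1/δ)⌉`, then `k` independent uniform samples from `[n]` contain,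
with probability at least `1 − δ/3`, an element `i` with `μ'(i) < μ(i)`. -/
theorem stmt_5 (n : ℕ) (hn : 0 < n) (ε δ : ℝ) (hε : 0 < ε) (hε1 : ε ≤ 1)
    (hδ : 0 < δ) (hδ1 : δ ≤ 1 / 2)
    (μ μ' : Fin n → ℝ)
    (hμ0 : ∀ i, 0 ≤ μ i) (hμ1 : ∑ i, μ i = 1)
    (hμ'0 : ∀ i, 0 ≤ μ' i) (hμ'1 : ∑ i, μ' i = 1)
    (hclose : ∀ i, |μ i - 1 / n| < ε / (100 * n))
    (hfar : ε ≤ (1 / 2) * ∑ i, |μ i - μ' i|)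
    (k : ℕ) (hk : k = ⌈(6 / ε) * Real.log (1 / δ)⌉₊)
    (ν : Measure (Fin n))
    (hν : ∀ i : Fin n, ν {i} = ENNReal.ofReal (1 / n)) :
    ENNReal.ofReal (1 - δ / 3) ≤
      Measure.pi (fun _ : Fin k => ν)
        {f | ∃ t : Fin k, μ' (f t) < μ (f t)} := by
  have hn' : (0:ℝ) < n := by exact_mod_cast hn
  set S : Finset (Fin n) := Finset.univ.filter (fun i => μ' i < μ i) with hS
  -- step 1 : ε ≤ ∑ i in S, (μ i - μ' i)
  have h0 : ∑ i, (μ i - μ' i) = 0 := by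
    rw [Finset.sum_sub_distrib, hμ1, hμ'1]; ring
  have habs : ∑ i, |μ i - μ' i| = 2 * ∑ i ∈ S, (μ i - μ' i) := by
    rw [hS, Finset.sum_filter]
    have h : ∀ i ∈ (Finset.univ : Finset (Fin n)), |μ i - μ' i|
        = 2 * (if μ' i < μ i then μ i - μ' i else 0) - (μ i - μ' i) := by
      intro i _
      by_cases h : μ' i < μ i
      · rw [if_pos h, abs_of_pos (by linarith)]; ring
      · rw [if_neg h, abs_of_nonpos (by push_neg at h; linarith)]; ring
    rw [Finset.sum_congr rfl h, Finset.sum_sub_distrib, h0, sub_zero, ← Finset.mul_sum]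
  have hSsum : ε ≤ ∑ i ∈ S, (μ i - μ' i) := by
    have := hfar; rw [habs] at this; linarith
  -- step 2 : cardinality bound
  have hterm : ∀ i ∈ S, μ i - μ' i ≤ 1/n + ε/(100*n) := by
    intro i _
    have h1 := abs_lt.mp (hclose i)
    have h2 := hμ'0 i
    linarith [h1.2]
  have hsum_le : ∑ i ∈ S, (μ i - μ' i) ≤ (S.card : ℝ) * (1/n + ε/(100*n)) :=
    le_trans (Finset.sum_le_sum hterm) (by rw [Finset.sum_const, nsmul_eq_mul])
  have h1 : ε ≤ (S.card:ℝ) * (1/n + ε/(100*n)) := hSsum.trans hsum_le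
  have h1' : ε * n ≤ (S.card:ℝ) * (1 + ε/100) := by
    have h2 := mul_le_mul_of_nonneg_right h1 (le_of_lt hn')
    calc ε * n ≤ (S.card:ℝ) * (1/n + ε/(100*n)) * n := h2
    _ = (S.card:ℝ) * (1 + ε/100) := by field_simp
  have key : ε * n * 100 ≤ (S.card : ℝ) * 101 := by
    nlinarith [Nat.cast_nonneg (α := ℝ) S.card, hε1, hε]
  -- complement cardinality
  have hcompl : ((Sᶜ.card : ℝ)) = n - S.card := by
    rw [Finset.card_compl]
    have hle : S.card ≤ Fintype.card (Fin n) := Finset.card_le_univ S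
    rw [Nat.cast_sub hle, Fintype.card_fin]
  have hx0 : (0:ℝ) ≤ (Sᶜ.card : ℝ)/n := by positivity
  have hx1 : (Sᶜ.card : ℝ)/n ≤ 1 - 100*ε/101 := by
    rw [div_le_iff₀ hn', hcompl]
    nlinarith [key]
  -- the real analytic estimate
  have hlogδ : 0 < Real.log (1/δ) := by
    apply Real.log_pos
    rw [lt_div_iff₀ hδ]; linarith
  have hkge : (6/ε) * Real.log (1/δ) ≤ (k:ℝ) := by
    rw [hk]; exact Nat.le_ceil _
  have hc0 : (0:ℝ) < 100*ε/101 := by positivity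
  have hc1 : 100*ε/101 ≤ 100/101 := by linarith
  have hreal : ((Sᶜ.card : ℝ)/n)^k ≤ δ/3 := by
    have s1 : ((Sᶜ.card : ℝ)/n)^k ≤ (1 - 100*ε/101)^k :=
      pow_le_pow_left₀ hx0 hx1 k
    have s2 : (1 - 100*ε/101)^k ≤ (Real.exp (-(100*ε/101)))^k := by
      apply pow_le_pow_left₀ (by linarith)
      linarith [Real.add_one_le_exp (-(100*ε/101))]
    have s3 : (Real.exp (-(100*ε/101)))^k = Real.exp (-(100*ε/101 * k)) := by
      rw [← Real.exp_nat_mul]; ring_nf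
    have hck : 3 * Real.log (1/δ) ≤ 100*ε/101 * k := by
      have h1 : (100*ε/101) * ((6/ε) * Real.log (1/δ)) ≤ (100*ε/101) * k :=
        mul_le_mul_of_nonneg_left hkge hc0.le
      have h2 : (100*ε/101) * ((6/ε) * Real.log (1/δ)) = (600/101) * Real.log (1/δ) := by
        field_simp
        ring
      nlinarith [hlogδ]
    have s4 : Real.exp (-(100*ε/101 * k)) ≤ Real.exp (-(3 * Real.log (1/δ))) :=
      Real.exp_le_exp.mpr (by linarith)
    have s5 : Real.exp (-(3 * Real.log (1/δ))) = δ^3 := by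
      have h3 : -(3*Real.log (1/δ)) = Real.log (δ^3) := by
        rw [Real.log_pow, one_div, Real.log_inv]; push_cast; ring
      rw [h3, Real.exp_log (by positivity)]
    have s6 : δ^3 ≤ δ/3 := by
      have h4 : δ*δ ≤ 1/4 := by
        have := mul_le_mul hδ1 hδ1 hδ.le (by norm_num : (0:ℝ) ≤ 1/2)
        linarith
      calc δ^3 = δ*(δ*δ) := by ring
        _ ≤ δ*(1/4) := mul_le_mul_of_nonneg_left h4 hδ.le
        _ ≤ δ/3 := by linarith
    calc ((Sᶜ.card : ℝ)/n)^k ≤ (1 - 100*ε/101)^k := s1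
      _ ≤ (Real.exp (-(100*ε/101)))^k := s2
      _ = Real.exp (-(100*ε/101 * k)) := s3
      _ ≤ Real.exp (-(3 * Real.log (1/δ))) := s4
      _ = δ^3 := s5
      _ ≤ δ/3 := s6
  -- measure-theoretic part
  have hmeasT : ∀ T : Finset (Fin n), ν ↑T = (T.card : ENNReal) * ENNReal.ofReal (1/n) := by
    intro T
    have hT : (↑T : Set (Fin n)) = ⋃ i ∈ T, ({i} : Set (Fin n)) := by
      ext i; simp
    have hdisj : (↑T : Set (Fin n)).PairwiseDisjoint (fun i => ({i} : Set (Fin n))) :=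
      fun i _ j _ hij => Set.disjoint_singleton.mpr hij
    rw [hT, measure_biUnion_finset hdisj (fun i _ => measurableSet_singleton i)]
    simp [hν, Finset.sum_const]
  have hνuniv : ν Set.univ = 1 := by
    have h : (Set.univ : Set (Fin n)) = ↑(Finset.univ : Finset (Fin n)) := by simp
    rw [h, hmeasT, Finset.card_univ, Fintype.card_fin,
      ← ENNReal.ofReal_natCast n, ← ENNReal.ofReal_mul (by positivity),
      mul_one_div, div_self (ne_of_gt hn'), ENNReal.ofReal_one]
  haveI : IsProbabilityMeasure ν := ⟨hνuniv⟩
  set E : Set (Fin k → Fin n) := {f | ∃ t, μ' (f t) < μ (f t)} with hE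
  have hEmeas : MeasurableSet E := by
    have h : E = ⋃ t : Fin k, (fun f => f t) ⁻¹' {i | μ' i < μ i} := by
      ext f; simp [hE]
    rw [h]
    exact MeasurableSet.iUnion fun t =>
      (measurable_pi_apply t) ((Set.to_countable _).measurableSet)
  have hEc : Eᶜ = Set.pi Set.univ (fun _ : Fin k => (↑(Sᶜ) : Set (Fin n))) := by
    ext f
    simp [hE, hS, Set.mem_pi]
  have hpic : Measure.pi (fun _ : Fin k => ν) Eᶜ
      = ENNReal.ofReal (((Sᶜ.card : ℝ)/n)^k) := by
    rw [hEc, Measure.pi_pi]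
    rw [Finset.prod_const, Finset.card_univ, Fintype.card_fin, hmeasT,
      ← ENNReal.ofReal_natCast, ← ENNReal.ofReal_mul (by positivity),
      ← ENNReal.ofReal_pow (by positivity), mul_one_div]
  have hEc_le : Measure.pi (fun _ : Fin k => ν) Eᶜ ≤ ENNReal.ofReal (δ/3) := by
    rw [hpic]; exact ENNReal.ofReal_le_ofReal hreal
  have huniv : Measure.pi (fun _ : Fin k => ν) Set.univ = 1 := measure_univ
  have hsplit := measure_add_measure_compl (μ := Measure.pi fun _ : Fin k => ν) hEmeas
  rw [huniv] at hsplit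
  have hfin : Measure.pi (fun _ : Fin k => ν) Eᶜ ≠ ⊤ := by
    rw [hpic]; exact ENNReal.ofReal_ne_top
  rw [show Measure.pi (fun _ : Fin k => ν) {f | ∃ t : Fin k, μ' (f t) < μ (f t)}
      = Measure.pi (fun _ : Fin k => ν) E from rfl]
  rw [← ENNReal.add_le_add_iff_right hfin, hsplit]
  calc ENNReal.ofReal (1 - δ/3) + Measure.pi (fun _ : Fin k => ν) Eᶜ
      ≤ ENNReal.ofReal (1 - δ/3) + ENNReal.ofReal (δ/3) := add_le_add_right hEc_le _
    _ = ENNReal.ofReal 1 := by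
        rw [← ENNReal.ofReal_add (by linarith) (by positivity)]; ring_nf
    _ = 1 := ENNReal.ofReal_one
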